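/- Let ψ, ψ' : G → G be commutator-central endomorphisms of a group G with ⁅ψ(g), ψ'(h)⁆ ∈ Z(G) for all g, h ∈ G, and let α, β ∈ 𝓔. Write g ∘ h := g ∘_{ψ,α} h and g ⋆ h := g ∘_{ψ',β} h; write g̃ := ψ_α(g)⁻¹·g⁻¹·ψ_α(g) (the ∘-inverse of g) and ḡ := ψ'_β(g)⁻¹·g⁻¹·ψ'_β(g) (the ⋆-inverse of g). Then the family N = {η_g : g ∈ G} with η_g(h) = g ∘ h is stable under conjugation by left ⋆-translations: for all k, g, h ∈ G, k ⋆ (g ∘ (k̄ ⋆ h)) = ((k ⋆ g) ∘ k̃) ∘ h, where k̄ is the ⋆-inverse of k and k̃ is the ∘-inverse of k. -/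

import Mathlib

/-- Evaluation of an element of the free group `𝓔 = FreeGroup (Monoid.End G)`
at an element `g : G`: the image of `α` under the homomorphism `𝓔 → G`
given by `FreeGroup.lift (fun φ => φ g)`. -/
def evalE {G : Type*} [Group G] (α : FreeGroup (Monoid.End G)) (g : G) : G :=
  FreeGroup.lift (fun φ : Monoid.End G => φ g) α

/-- The binary operation `g ∘_{ψ,α} h = g · ψ_α(g) · h · ψ_α(g)⁻¹`, where
`ψ_α(g) = ψ (α(g))`. -/
def op {G : Type*} [Group G] (ψ : Monoid.End G) (α : FreeGroup (Monoid.End G)) (g h : G) : G :=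
  g * ψ (evalE α g) * h * (ψ (evalE α g))⁻¹

open scoped commutatorElement

/-- Abstract form of the stability identity. -/
theorem op_abstract {G Q : Type*} [Group G] [Group Q]
    (σ : Q →* MulAut G) (A B : G →* Q)
    (hAB : ∀ x y : G, Commute (A x) (B y))
    (hAA : ∀ x y : G, Commute (A x) (A y))
    (hAσ : ∀ (q : Q) (x : G), A (σ q x) = A x)
    (hBσ : ∀ (q : Q) (x : G), B (σ q x) = B x)
    (k g h : G) :
    k * σ (B k) (g * σ (A g) (σ ((B k)⁻¹) k⁻¹ * σ (B (σ ((B k)⁻¹) k⁻¹)) h)) =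
      (k * σ (B k) g) * σ (A (k * σ (B k) g)) (σ ((A k)⁻¹) k⁻¹)
        * σ (A ((k * σ (B k) g) * σ (A (k * σ (B k) g)) (σ ((A k)⁻¹) k⁻¹))) h := by
  have happ : ∀ (q r : Q) (x : G), σ q (σ r x) = σ (q * r) x := by
    intro q r x; rw [map_mul]; rfl
  have hBkb : B (σ ((B k)⁻¹) k⁻¹) = (B k)⁻¹ := by rw [hBσ, map_inv]
  have hAm : A (k * σ (B k) g) = A k * A g := by rw [map_mul, hAσ]
  have hAka : A (σ ((A k)⁻¹) k⁻¹) = (A k)⁻¹ := by rw [hAσ, map_inv]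
  have hAp : A ((k * σ (B k) g) * σ (A (k * σ (B k) g)) (σ ((A k)⁻¹) k⁻¹)) = A g := by
    rw [map_mul, hAσ, hAka, hAm, (hAA k g).eq, mul_inv_cancel_right]
  have swap : ∀ (q r : Q) (x : G), Commute q r → σ q (σ r (σ q⁻¹ x)) = σ r x := by
    intro q r x hc
    rw [happ, happ, hc.eq, mul_inv_cancel_right]
  rw [hAp, hBkb, hAm]
  simp only [map_mul, MulAut.mul_apply]
  rw [swap _ _ _ ((hAB g k).symm), swap _ _ _ ((hAB g k).symm), swap _ _ _ (hAA k g)]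
  simp [mul_assoc]

theorem op_stable_two_maps {G : Type*} [Group G]
    (ψ ψ' : Monoid.End G)
    (hψ : ∀ g h : G, ψ ⁅g, h⁆ ∈ Subgroup.center G)
    (hψ' : ∀ g h : G, ψ' ⁅g, h⁆ ∈ Subgroup.center G)
    (hcomm : ∀ g h : G, ⁅ψ g, ψ' h⁆ ∈ Subgroup.center G)
    (α β : FreeGroup (Monoid.End G)) (k g h : G) :
    op ψ' β k (op ψ α g (op ψ' β ((ψ' (evalE β k))⁻¹ * k⁻¹ * ψ' (evalE β k)) h)) =
      op ψ α (op ψ α (op ψ' β k g) ((ψ (evalE α k))⁻¹ * k⁻¹ * ψ (evalE α k))) h := by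
  let π : G →* G ⧸ Subgroup.center G := QuotientGroup.mk' (Subgroup.center G)
  -- commuting images mod center
  have key : ∀ (χ χ' : Monoid.End G), (∀ u v : G, ⁅χ u, χ' v⁆ ∈ Subgroup.center G) →
      ∀ u v : G, Commute (π (χ u)) (π (χ' v)) := by
    intro χ χ' hc u v
    have h1 : π ⁅χ u, χ' v⁆ = 1 := (QuotientGroup.eq_one_iff _).2 (hc u v)
    rw [map_commutatorElement] at h1
    exact commutatorElement_eq_one_iff_commute.mp h1
  have hψc : ∀ u v : G, ⁅ψ u, ψ v⁆ ∈ Subgroup.center G := by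
    intro u v; rw [← map_commutatorElement]; exact hψ u v
  have hψ'c : ∀ u v : G, ⁅ψ' u, ψ' v⁆ ∈ Subgroup.center G := by
    intro u v; rw [← map_commutatorElement]; exact hψ' u v
  have hAAc := key ψ ψ hψc
  have hBBc := key ψ' ψ' hψ'c
  have hABc := key ψ ψ' hcomm
  -- multiplicativity mod center of g ↦ π (χ (evalE γ g))
  have hev : ∀ (χ : Monoid.End G), (∀ u v : G, Commute (π (χ u)) (π (χ v))) →
      ∀ (γ : FreeGroup (Monoid.End G)) (x y : G),
      π (χ (evalE γ (x * y))) = π (χ (evalE γ x)) * π (χ (evalE γ y)) := by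
    intro χ hc γ
    induction γ with
    | C1 => intro x y; simp [evalE]
    | of φ =>
      intro x y
      have epure : ∀ g : G, evalE (FreeGroup.of φ : FreeGroup (Monoid.End G)) g = φ g := by
        intro g; exact FreeGroup.lift_apply_of
      simp only [epure, map_mul]
    | inv_of φ ih =>
      intro x y
      have e : ∀ g : G, evalE (FreeGroup.of φ : FreeGroup (Monoid.End G))⁻¹ g = (φ g)⁻¹ := by
        intro g
        show (FreeGroup.lift (fun φ : Monoid.End G => φ g)) (FreeGroup.of φ)⁻¹ = _
        simp
      simp only [e, map_mul, map_inv, mul_inv_rev]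
      exact ((hc (φ x) (φ y)).inv_inv.symm).eq
    | mul γ δ ih1 ih2 =>
      intro x y
      have e : ∀ (g : G), evalE (γ * δ) g = evalE γ g * evalE δ g := by
        intro g; exact map_mul (FreeGroup.lift (fun φ : Monoid.End G => φ g)) γ δ
      simp only [e, map_mul, ih1, ih2]
      exact (hc (evalE δ x) (evalE γ y)).symm.mul_mul_mul_comm _ _
  -- the homomorphisms A, B : G →* G ⧸ Z
  let A : G →* G ⧸ Subgroup.center G :=
    MonoidHom.mk' (fun g => π (ψ (evalE α g))) (hev ψ hAAc α)
  let B : G →* G ⧸ Subgroup.center G :=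
    MonoidHom.mk' (fun g => π (ψ' (evalE β g))) (hev ψ' hBBc β)
  -- the conjugation homomorphism σ : G ⧸ Z →* MulAut G
  let σ : (G ⧸ Subgroup.center G) →* MulAut G :=
    QuotientGroup.lift (Subgroup.center G) MulAut.conj (by
      intro z hz
      rw [MonoidHom.mem_ker]
      ext x
      simp only [MulAut.conj_apply, MulAut.one_apply]
      rw [← Subgroup.mem_center_iff.mp hz x, mul_inv_cancel_right])
  have hσ : ∀ (c x : G), σ (π c) x = c * x * c⁻¹ := by
    intro c x
    have h1 : σ (π c) = MulAut.conj c := QuotientGroup.lift_mk' _ _ c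
    rw [h1, MulAut.conj_apply]
  have hAσ : ∀ (q : G ⧸ Subgroup.center G) (x : G), A (σ q x) = A x := by
    intro q x
    refine QuotientGroup.induction_on q ?_
    intro u
    rw [show ((u : G ⧸ Subgroup.center G)) = π u from rfl, hσ]
    have hc : Commute (A u) (A x) := hAAc _ _
    rw [map_mul, map_mul, map_inv, hc.eq, mul_inv_cancel_right]
  have hBσ : ∀ (q : G ⧸ Subgroup.center G) (x : G), B (σ q x) = B x := by
    intro q x
    refine QuotientGroup.induction_on q ?_
    intro u
    rw [show ((u : G ⧸ Subgroup.center G)) = π u from rfl, hσ]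
    have hc : Commute (B u) (B x) := hBBc _ _
    rw [map_mul, map_mul, map_inv, hc.eq, mul_inv_cancel_right]
  have hopA : ∀ x y : G, op ψ α x y = x * σ (A x) y := by
    intro x y
    show x * ψ (evalE α x) * y * (ψ (evalE α x))⁻¹ = x * σ (π (ψ (evalE α x))) y
    rw [hσ]
    group
  have hopB : ∀ x y : G, op ψ' β x y = x * σ (B x) y := by
    intro x y
    show x * ψ' (evalE β x) * y * (ψ' (evalE β x))⁻¹ = x * σ (π (ψ' (evalE β x))) y
    rw [hσ]
    group
  have hkb : σ ((B k)⁻¹) k⁻¹ =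
      (ψ' (evalE β k))⁻¹ * k⁻¹ * ψ' (evalE β k) := by
    have h1 : (B k)⁻¹ = π ((ψ' (evalE β k))⁻¹) := (map_inv π _).symm
    rw [h1, hσ, inv_inv]
  have hka : σ ((A k)⁻¹) k⁻¹ =
      (ψ (evalE α k))⁻¹ * k⁻¹ * ψ (evalE α k) := by
    have h1 : (A k)⁻¹ = π ((ψ (evalE α k))⁻¹) := (map_inv π _).symm
    rw [h1, hσ, inv_inv]
  simp only [hopA, hopB, ← hkb, ← hka]
  exact op_abstract σ A B (fun x y => hABc _ _) (fun x y => hAAc _ _) hAσ hBσ k g h
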